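/- Let a < c be reals and let x : [a,c] → [0,1] and p : [a,c] → ℝ satisfy: (BIC) for all b, b' ∈ [a,c], b·x(b) − p(b) ≥ b·x(b') − p(b'), and (IR) for all b ∈ [a,c], b·x(b) − p(b) ≥ 0. Then x is nondecreasing on [a,c], and there exists a constant θ ≥ 0 (namely θ = a·x(a) − p(a)) such that for every b ∈ [a,c], p(b) = b·x(b) − ∫_a^b x(t) dt − θ. -/

import Mathlib

open Set intervalIntegral

/-- buyer-side payment identity: if the interim allocation `x` (taking
values in `[0,1]`) and interim payment `p` of a single-dimensional buyer with value space
`[a,c]` satisfy BIC and IR, then `x` is nondecreasing on `[a,c]` and, with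
`θ = a·x(a) − p(a) ≥ 0`, for every `b ∈ [a,c]` we have
`p(b) = b·x(b) − ∫_a^b x(t) dt − θ`. -/
theorem stmt_14 (a c : ℝ) (hac : a < c) (x p : ℝ → ℝ)
    (hx01 : ∀ b ∈ Set.Icc a c, x b ∈ Set.Icc (0 : ℝ) 1)
    (hBIC : ∀ b ∈ Set.Icc a c, ∀ b' ∈ Set.Icc a c, b * x b' - p b' ≤ b * x b - p b)
    (hIR : ∀ b ∈ Set.Icc a c, 0 ≤ b * x b - p b) :
    MonotoneOn x (Set.Icc a c) ∧
    0 ≤ a * x a - p a ∧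
    ∀ b ∈ Set.Icc a c, p b = b * x b - (∫ t in a..b, x t) - (a * x a - p a) := by
  set u : ℝ → ℝ := fun b => b * x b - p b with hu
  have key : ∀ s ∈ Icc a c, ∀ t ∈ Icc a c, s ≤ t →
      (t - s) * x s ≤ u t - u s ∧ u t - u s ≤ (t - s) * x t := by
    intro s hs t ht hst
    have h1 := hBIC t ht s hs
    have h2 := hBIC s hs t ht
    constructor <;> simp only [hu] <;> nlinarith
  have hmono : MonotoneOn x (Icc a c) := by
    intro s hs t ht hst
    rcases eq_or_lt_of_le hst with rfl | h
    · exact le_rfl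
    obtain ⟨k1, k2⟩ := key s hs t ht hst
    nlinarith
  have hint : ∀ s ∈ Icc a c, ∀ t ∈ Icc a c, s ≤ t → IntervalIntegrable x MeasureTheory.volume s t := by
    intro s hs t ht hst
    apply MonotoneOn.intervalIntegrable
    apply hmono.mono
    rw [uIcc_of_le hst]
    exact Icc_subset_Icc hs.1 ht.2
  have intb : ∀ s ∈ Icc a c, ∀ t ∈ Icc a c, s ≤ t →
      (t - s) * x s ≤ (∫ r in s..t, x r) ∧ (∫ r in s..t, x r) ≤ (t - s) * x t := by
    intro s hs t ht hst
    have hI := hint s hs t ht hst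
    have hsub : Icc s t ⊆ Icc a c := Icc_subset_Icc hs.1 ht.2
    constructor
    · have := intervalIntegral.integral_mono_on hst (_root_.intervalIntegrable_const (c := x s)) hI
        (fun r hr => hmono hs (hsub hr) hr.1)
      simpa [intervalIntegral.integral_const, smul_eq_mul] using this
    · have := intervalIntegral.integral_mono_on hst hI (_root_.intervalIntegrable_const (c := x t))
        (fun r hr => hmono (hsub hr) ht (hr.2))
      simpa [intervalIntegral.integral_const, smul_eq_mul] using this
  have hstep : ∀ s ∈ Icc a c, ∀ t ∈ Icc a c, s ≤ t →
      |(u t - u a - ∫ r in a..t, x r) - (u s - u a - ∫ r in a..s, x r)| ≤ (t - s) * (x t - x s) := by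
    intro s hs t ht hst
    have ha : a ∈ Icc a c := ⟨le_refl a, le_of_lt hac⟩
    have hadd : (∫ r in a..s, x r) + (∫ r in a..t, x r) - (∫ r in a..s, x r)
        = ∫ r in a..t, x r := by ring
    have hsplit : (∫ r in a..s, x r) + (∫ r in s..t, x r) = ∫ r in a..t, x r :=
      intervalIntegral.integral_add_adjacent_intervals (hint a ha s hs hs.1) (hint s hs t ht hst)
    obtain ⟨k1, k2⟩ := key s hs t ht hst
    obtain ⟨i1, i2⟩ := intb s hs t ht hst
    rw [abs_le]
    constructor <;> nlinarith [hsplit]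
  refine ⟨hmono, hIR a ⟨le_refl a, le_of_lt hac⟩, ?_⟩
  intro b hb
  have ha : a ∈ Icc a c := ⟨le_refl a, le_of_lt hac⟩
  have hab : a ≤ b := hb.1
  have hzero : u b - u a - (∫ r in a..b, x r) = 0 := by
    have hbound : ∀ n : ℕ, 0 < n →
        |u b - u a - (∫ r in a..b, x r)| ≤ (b - a) * (x b - x a) / n := by
      intro n hn
      have hn' : (0 : ℝ) < n := Nat.cast_pos.mpr hn
      set δ : ℝ := (b - a) / n with hδ
      have hδ0 : 0 ≤ δ := div_nonneg (by linarith) (le_of_lt hn')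
      set g : ℕ → ℝ := fun i => u (a + i * δ) - u a - (∫ r in a..(a + i * δ), x r) with hg
      have hpt : ∀ i : ℕ, i ≤ n → (a + i * δ) ∈ Icc a c := by
        intro i hi
        constructor
        · nlinarith [mul_nonneg (Nat.cast_nonneg (α := ℝ) i) hδ0]
        · have : (i : ℝ) * δ ≤ n * δ := by
            apply mul_le_mul_of_nonneg_right _ hδ0
            exact_mod_cast hi
          have hnδ : (n : ℝ) * δ = b - a := by
            rw [hδ]; field_simp
          have := hb.2
          linarith
      have hend : a + (n : ℝ) * δ = b := by
        have hnδ : (n : ℝ) * δ = b - a := by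
          rw [hδ]; field_simp
        linarith
      have htel : g n - g 0 = ∑ i ∈ Finset.range n, (g (i + 1) - g i) :=
        (Finset.sum_range_sub g n).symm
      have hg0 : g 0 = 0 := by simp [hg]
      have hsum : |g n| ≤ ∑ i ∈ Finset.range n, δ * (x (a + (i + 1 : ℕ) * δ) - x (a + i * δ)) := by
        calc |g n| = |∑ i ∈ Finset.range n, (g (i + 1) - g i)| := by rw [← htel, hg0]; ring_nf
          _ ≤ ∑ i ∈ Finset.range n, |g (i + 1) - g i| := Finset.abs_sum_le_sum_abs _ _
          _ ≤ _ := by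
            apply Finset.sum_le_sum
            intro i hi
            have hi' : i < n := Finset.mem_range.mp hi
            have hs := hpt i (le_of_lt hi')
            have ht := hpt (i + 1) hi'
            have hle : a + (i : ℝ) * δ ≤ a + ((i : ℕ) + 1 : ℕ) * δ := by
              push_cast
              nlinarith
            have := hstep (a + i * δ) hs (a + ((i : ℕ) + 1 : ℕ) * δ) ht hle
            have heq : (a + ((i : ℕ) + 1 : ℕ) * δ) - (a + i * δ) = δ := by push_cast; ring
            rw [heq] at this
            simpa [hg] using this
      have hsum2 : ∑ i ∈ Finset.range n, δ * (x (a + (i + 1 : ℕ) * δ) - x (a + i * δ))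
          = δ * (x b - x a) := by
        rw [← Finset.mul_sum]
        congr 1
        have := Finset.sum_range_sub (fun i : ℕ => x (a + i * δ)) n
        simp only [Nat.cast_zero, zero_mul, add_zero] at this
        rw [this, hend]
      have hgn : g n = u b - u a - (∫ r in a..b, x r) := by
        simp only [hg, hend]
      rw [← hgn]
      rw [hsum2] at hsum
      calc |g n| ≤ δ * (x b - x a) := hsum
        _ = (b - a) * (x b - x a) / n := by rw [hδ]; ring
    have htend : Filter.Tendsto (fun n : ℕ => (b - a) * (x b - x a) / n) Filter.atTop (nhds 0) :=
      tendsto_const_div_atTop_nhds_zero_nat _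
    have : |u b - u a - (∫ r in a..b, x r)| ≤ 0 := by
      apply ge_of_tendsto htend
      filter_upwards [Filter.eventually_gt_atTop 0] with n hn
      exact hbound n hn
    have := abs_nonneg (u b - u a - (∫ r in a..b, x r))
    have habs : |u b - u a - (∫ r in a..b, x r)| = 0 := le_antisymm ‹_› ‹_›
    exact abs_eq_zero.mp habs
  simp only [hu] at hzero
  linarith
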